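/- For every context-free grammar G in Chomsky normal form and every nonterminal A and indices 0 ≤ i ≤ ℓ, the language generated from A^[i] in the annotated grammar G^[ℓ] equals the index-(i+1) approximation language of A in G: L(G^[ℓ], A^[i]) = L_{i+1}(G, A). -/

import Mathlib

/-- A context-free grammar in Chomsky normal form with nonterminals `N` and
terminals `T`: binary productions `A → BC` and terminal productions `A → w`
with `w ∈ T ∪ {ε}` (`w : Option T`). -/
structure CNFGram (N T : Type) where
  bin : N → N → N → Prop
  term : N → Option T → Prop

/-- Number of nonterminal occurrences in a sentential form. -/
def countN {N T : Type} (w : List (N ⊕ T)) : ℕ := (w.filter Sum.isLeft).length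

/-- One derivation step of a CNF grammar. -/
inductive CNFStep {N T : Type} (G : CNFGram N T) :
    List (N ⊕ T) → List (N ⊕ T) → Prop
  | bin {x z : List (N ⊕ T)} {A B C : N} (h : G.bin A B C) :
      CNFStep G (x ++ [Sum.inl A] ++ z) (x ++ [Sum.inl B, Sum.inl C] ++ z)
  | term {x z : List (N ⊕ T)} {A : N} {t : Option T} (h : G.term A t) :
      CNFStep G (x ++ [Sum.inl A] ++ z) (x ++ (t.toList.map Sum.inr) ++ z)

/-- Index-`k` restricted derivation step: both sentential forms contain at most
`k` nonterminal occurrences. -/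
def CNFStepK {N T : Type} (G : CNFGram N T) (k : ℕ)
    (u v : List (N ⊕ T)) : Prop :=
  CNFStep G u v ∧ countN u ≤ k ∧ countN v ≤ k

/-- `L(G, A)`: terminal words derivable from the nonterminal `A`. -/
def CNFLangFrom {N T : Type} (G : CNFGram N T) (A : N) : Set (List T) :=
  {w | Relation.ReflTransGen (CNFStep G) [Sum.inl A] (w.map Sum.inr)}

/-- `L_k(G, A)`: terminal words derivable from `A` by index-`k` derivations. -/
def CNFLangK {N T : Type} (G : CNFGram N T) (k : ℕ) (A : N) : Set (List T) :=
  {w | Relation.ReflTransGen (CNFStepK G k) [Sum.inl A] (w.map Sum.inr)}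

/-- The annotated grammar `G^[ℓ]`: nonterminals `A^[i]` for `0 ≤ i ≤ ℓ`,
productions `A^[i] → B^[i] C^[i-1]` and `A^[i] → B^[i-1] C^[i]` for each
`A → BC` and `1 ≤ i ≤ ℓ`, and `A^[i] → w` for each terminal production
`A → w` and `0 ≤ i ≤ ℓ`. -/
def annGram {N T : Type} (G : CNFGram N T) (ℓ : ℕ) : CNFGram (N × ℕ) T where
  bin := fun p q r =>
    1 ≤ p.2 ∧ p.2 ≤ ℓ ∧ G.bin p.1 q.1 r.1 ∧
      ((q.2 = p.2 ∧ r.2 = p.2 - 1) ∨ (q.2 = p.2 - 1 ∧ r.2 = p.2))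
  term := fun p t => p.2 ≤ ℓ ∧ G.term p.1 t
namespace AGaux

variable {N T : Type}

lemma countN_append (x y : List (N ⊕ T)) : countN (x ++ y) = countN x + countN y := by
  simp [countN, List.filter_append]

lemma countN_map_inr (w : List T) : countN (w.map Sum.inr : List (N ⊕ T)) = 0 := by
  induction w with
  | nil => rfl
  | cons a w ih => simpa [countN, List.filter_cons] using ih

lemma countN_inr_cons (t : T) (α : List (N ⊕ T)) :
    countN (Sum.inr t :: α) = countN α := by
  simp [countN, List.filter_cons]

lemma countN_inl_cons (A : N) (α : List (N ⊕ T)) :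
    countN (Sum.inl A :: α) = countN α + 1 := by
  simp [countN, List.filter_cons, Nat.add_comm]

lemma CNFStep_context {G : CNFGram N T} {u v : List (N ⊕ T)} (x z : List (N ⊕ T))
    (h : CNFStep G u v) : CNFStep G (x ++ u ++ z) (x ++ v ++ z) := by
  cases h with
  | @bin x1 z1 A B C h =>
    have := @CNFStep.bin N T G (x ++ x1) (z1 ++ z) A B C h
    simpa [List.append_assoc] using this
  | @term x1 z1 A t h =>
    have := @CNFStep.term N T G (x ++ x1) (z1 ++ z) A t h
    simpa [List.append_assoc] using this

lemma CNFStepK_context {G : CNFGram N T} {j : ℕ} {u v : List (N ⊕ T)} (x z : List (N ⊕ T))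
    (h : CNFStepK G j u v) :
    CNFStepK G (j + countN x + countN z) (x ++ u ++ z) (x ++ v ++ z) := by
  obtain ⟨hs, hu, hv⟩ := h
  refine ⟨CNFStep_context x z hs, ?_, ?_⟩ <;> simp [countN_append] <;> omega

lemma chainK_context {G : CNFGram N T} {j : ℕ} {u v : List (N ⊕ T)} (x z : List (N ⊕ T))
    (h : Relation.ReflTransGen (CNFStepK G j) u v) :
    Relation.ReflTransGen (CNFStepK G (j + countN x + countN z)) (x ++ u ++ z) (x ++ v ++ z) := by
  induction h with
  | refl => exact .refl
  | tail _ hstep ih => exact ih.tail (CNFStepK_context x z hstep)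

lemma chainK_mono {G : CNFGram N T} {j k : ℕ} (hjk : j ≤ k) {u v : List (N ⊕ T)}
    (h : Relation.ReflTransGen (CNFStepK G j) u v) :
    Relation.ReflTransGen (CNFStepK G k) u v :=
  Relation.ReflTransGen.mono (r := CNFStepK G j) (p := CNFStepK G k)
    (fun _ _ hab => ⟨hab.1, hab.2.1.trans hjk, hab.2.2.trans hjk⟩) _ _ h

/-- Derivation trees with index bound: `YD H k A w` means `w` is derivable from
`A` by a derivation of index at most `k`. -/
inductive YD (H : CNFGram N T) : ℕ → N → List T → Prop
  | term {A : N} {t : Option T} {i : ℕ} (h : H.term A t) (hi : 1 ≤ i) : YD H i A t.toList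
  | binl {A B C : N} {u v : List T} {i : ℕ} (h : H.bin A B C)
      (hb : YD H (i + 1) B u) (hc : YD H i C v) : YD H (i + 1) A (u ++ v)
  | binr {A B C : N} {u v : List T} {i : ℕ} (h : H.bin A B C)
      (hb : YD H i B u) (hc : YD H (i + 1) C v) : YD H (i + 1) A (u ++ v)

lemma YD_pos {H : CNFGram N T} {k : ℕ} {A : N} {w : List T} (h : YD H k A w) : 1 ≤ k := by
  cases h with
  | term h hi => exact hi
  | binl => omega
  | binr => omega

lemma YD_mono {H : CNFGram N T} {k : ℕ} {A : N} {w : List T} (h : YD H k A w) :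
    ∀ {j : ℕ}, k ≤ j → YD H j A w := by
  induction h with
  | term h hi => exact fun hj => YD.term h (hi.trans hj)
  | binl h hb hc ihb ihc =>
    intro j hj
    obtain ⟨j', rfl⟩ : ∃ j', j = j' + 1 := ⟨j - 1, by omega⟩
    exact YD.binl h (ihb (by omega)) (ihc (by omega))
  | binr h hb hc ihb ihc =>
    intro j hj
    obtain ⟨j', rfl⟩ : ∃ j', j = j' + 1 := ⟨j - 1, by omega⟩
    exact YD.binr h (ihb (by omega)) (ihc (by omega))

lemma YD_comb {H : CNFGram N T} {A B C : N} {u v : List T} {b c : ℕ}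
    (hbin : H.bin A B C) (hb : YD H b B u) (hc : YD H c C v) :
    YD H (if b = c then b + 1 else max b c) A (u ++ v) := by
  rcases lt_trichotomy b c with h | h | h
  · rw [if_neg h.ne, max_eq_right h.le]
    obtain ⟨c', rfl⟩ : ∃ c', c = c' + 1 := ⟨c - 1, by omega⟩
    exact YD.binr hbin (YD_mono hb (by omega)) hc
  · subst h
    rw [if_pos rfl]
    exact YD.binl hbin (YD_mono hb (by omega)) hc
  · rw [if_neg h.ne', max_eq_left h.le]
    obtain ⟨b', rfl⟩ : ∃ b', b = b' + 1 := ⟨b - 1, by omega⟩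
    exact YD.binl hbin hb (YD_mono hc (by omega))

lemma YD_derive {G : CNFGram N T} {k : ℕ} {A : N} {w : List T} (h : YD G k A w) :
    Relation.ReflTransGen (CNFStepK G k) [Sum.inl A] (w.map Sum.inr) := by
  induction h with
  | @term A t i h hi =>
    refine Relation.ReflTransGen.single ⟨?_, ?_, ?_⟩
    · simpa using @CNFStep.term N T G [] [] A t h
    · simpa [countN_inl_cons, countN, List.filter_cons] using hi
    · simp [countN_map_inr]
  | @binl A B C u v i h hb hc ihb ihc =>
    have hipos : 1 ≤ i := YD_pos hc
    have h1 : CNFStepK G (i + 1) [Sum.inl A] [Sum.inl B, Sum.inl C] := by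
      refine ⟨by simpa using @CNFStep.bin N T G [] [] A B C h, ?_, ?_⟩
      · simp [countN, List.filter_cons]
      · simp only [countN, List.filter_cons]; simp; omega
    have h2 : Relation.ReflTransGen (CNFStepK G (i + 1)) ([Sum.inl B] ++ [Sum.inl C] ++ [])
        ([Sum.inl B] ++ v.map Sum.inr ++ []) :=
      chainK_mono (by simp [countN, List.filter_cons]) (chainK_context [Sum.inl B] [] ihc)
    have h3 : Relation.ReflTransGen (CNFStepK G (i + 1)) ([] ++ [Sum.inl B] ++ v.map Sum.inr)
        ([] ++ u.map Sum.inr ++ v.map Sum.inr) :=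
      chainK_mono (by simp [countN]) (chainK_context [] (v.map Sum.inr) ihb)
    simp only [List.append_nil, List.nil_append, List.singleton_append, List.cons_append] at h2 h3
    have := (Relation.ReflTransGen.single h1).trans (h2.trans h3)
    simpa [List.map_append] using this
  | @binr A B C u v i h hb hc ihb ihc =>
    have hipos : 1 ≤ i := YD_pos hb
    have h1 : CNFStepK G (i + 1) [Sum.inl A] [Sum.inl B, Sum.inl C] := by
      refine ⟨by simpa using @CNFStep.bin N T G [] [] A B C h, ?_, ?_⟩
      · simp [countN, List.filter_cons]
      · simp only [countN, List.filter_cons]; simp; omega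
    have h2 : Relation.ReflTransGen (CNFStepK G (i + 1)) ([] ++ [Sum.inl B] ++ [Sum.inl C])
        ([] ++ u.map Sum.inr ++ [Sum.inl C]) :=
      chainK_mono (by simp [countN, List.filter_cons]) (chainK_context [] [Sum.inl C] ihb)
    have h3 : Relation.ReflTransGen (CNFStepK G (i + 1)) (u.map Sum.inr ++ [Sum.inl C] ++ [])
        (u.map Sum.inr ++ v.map Sum.inr ++ []) :=
      chainK_mono (by simp [countN, countN_map_inr]) (chainK_context (u.map Sum.inr) [] ihc)
    simp only [List.append_nil, List.nil_append, List.singleton_append, List.cons_append] at h2 h3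
    have := (Relation.ReflTransGen.single h1).trans (h2.trans h3)
    simpa [List.map_append] using this

end AGaux
namespace AGaux

variable {N T : Type}

/-- Number of elements `≥ t` in a multiset of weights. -/
def cnt (t : ℕ) (M : Multiset ℕ) : ℕ := Multiset.countP (fun x => t ≤ x) M

lemma cnt_zero (t : ℕ) : cnt t 0 = 0 := rfl

lemma cnt_cons (t a : ℕ) (M : Multiset ℕ) :
    cnt t (a ::ₘ M) = cnt t M + if t ≤ a then 1 else 0 := by
  simp [cnt, Multiset.countP_cons]

lemma cnt_le_card (t : ℕ) (M : Multiset ℕ) : cnt t M ≤ Multiset.card M :=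
  Multiset.countP_le_card _ _

lemma cnt_anti {t s : ℕ} (hts : t ≤ s) (M : Multiset ℕ) : cnt s M ≤ cnt t M := by
  induction M using Multiset.induction with
  | empty => simp [cnt_zero]
  | cons a M ih => simp only [cnt_cons]; split_ifs <;> omega

/-- Compatibility of a multiset of tree weights with index bound `k`. -/
def ok (k : ℕ) (M : Multiset ℕ) : Prop :=
  ∀ t : ℕ, 0 < cnt t M → t + cnt t M ≤ k + 1

lemma ok_zero (k : ℕ) : ok k 0 := fun t ht => by simp [cnt_zero] at ht

lemma okA {k : ℕ} {M : Multiset ℕ} (hcard : Multiset.card M + 1 ≤ k) (h : ok k M) :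
    ok k (1 ::ₘ M) := by
  intro t ht
  rcases Nat.lt_or_ge t 2 with h2 | h2
  · have := cnt_le_card t M
    rw [cnt_cons] at *
    split_ifs at * <;> omega
  · rw [cnt_cons, if_neg (by omega)] at ht ⊢
    have := h t (by omega)
    omega

lemma cnt_cons_le {t a : ℕ} (h : t ≤ a) (M : Multiset ℕ) :
    cnt t (a ::ₘ M) = cnt t M + 1 := by
  simp [cnt_cons, h]

lemma cnt_cons_gt {t a : ℕ} (h : a < t) (M : Multiset ℕ) :
    cnt t (a ::ₘ M) = cnt t M := by
  simp [cnt_cons, Nat.not_le.mpr h]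

lemma okB {k b c : ℕ} {M : Multiset ℕ} (h : ok k (b ::ₘ c ::ₘ M)) :
    ok k ((if b = c then b + 1 else max b c) ::ₘ M) := by
  intro t ht
  by_cases hbc : b = c
  · subst hbc
    rw [if_pos rfl] at ht ⊢
    rcases Nat.lt_trichotomy t (b + 1) with htb | htb | htb
    · rw [cnt_cons_le (by omega)] at ht ⊢
      have := h t (by rw [cnt_cons_le (by omega), cnt_cons_le (by omega)]; omega)
      rw [cnt_cons_le (by omega), cnt_cons_le (by omega)] at this
      omega
    · rw [cnt_cons_le (by omega)] at ht ⊢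
      have hb := h b (by rw [cnt_cons_le le_rfl, cnt_cons_le le_rfl]; omega)
      rw [cnt_cons_le le_rfl, cnt_cons_le le_rfl] at hb
      have hmono := cnt_anti (show b ≤ t by omega) M
      omega
    · rw [cnt_cons_gt (by omega)] at ht ⊢
      have := h t (by rw [cnt_cons_gt (by omega), cnt_cons_gt (by omega)]; omega)
      rw [cnt_cons_gt (by omega), cnt_cons_gt (by omega)] at this
      omega
  · rw [if_neg hbc] at ht ⊢
    have hle : cnt t ((max b c) ::ₘ M) ≤ cnt t (b ::ₘ c ::ₘ M) := by
      rcases Nat.le_total b c with hbc' | hbc'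
      · rw [max_eq_right hbc']
        exact Multiset.countP_le_of_le _ (Multiset.le_cons_self _ _)
      · rw [max_eq_left hbc']
        exact Multiset.countP_le_of_le _ (Multiset.cons_le_cons _ (Multiset.le_cons_self _ _))
    have := h t (by omega)
    omega

/-- Yield of a sentential form: each nonterminal occurrence carries a
derivation tree; the multiset collects the tree weights. -/
inductive YK (H : CNFGram N T) : List (N ⊕ T) → List T → Multiset ℕ → Prop
  | nil : YK H [] [] 0
  | consT {α : List (N ⊕ T)} {w : List T} {M : Multiset ℕ} {t : T}
      (h : YK H α w M) : YK H (Sum.inr t :: α) (t :: w) M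
  | consN {α : List (N ⊕ T)} {w u : List T} {M : Multiset ℕ} {A : N} {d : ℕ}
      (ht : YD H d A u) (h : YK H α w M) : YK H (Sum.inl A :: α) (u ++ w) (d ::ₘ M)

lemma YK_card {H : CNFGram N T} {α : List (N ⊕ T)} {w : List T} {M : Multiset ℕ}
    (h : YK H α w M) : Multiset.card M = countN α := by
  induction h with
  | nil => rfl
  | consT h ih => rw [countN_inr_cons]; exact ih
  | consN ht h ih => rw [countN_inl_cons]; simp [ih]

lemma YK_refl {H : CNFGram N T} (w : List T) : YK H (w.map Sum.inr) w 0 := by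
  induction w with
  | nil => exact YK.nil
  | cons a w ih => exact YK.consT ih

lemma YK_append {H : CNFGram N T} {x : List (N ⊕ T)} {w1 : List T} {M1 : Multiset ℕ}
    (h1 : YK H x w1 M1) :
    ∀ {y : List (N ⊕ T)} {w2 : List T} {M2 : Multiset ℕ}, YK H y w2 M2 →
      YK H (x ++ y) (w1 ++ w2) (M1 + M2) := by
  induction h1 with
  | nil => intro y w2 M2 h2; simpa using h2
  | consT h ih => intro y w2 M2 h2; exact YK.consT (ih h2)
  | @consN α w u M A d ht h ih =>
    intro y w2 M2 h2
    have := YK.consN ht (ih h2)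
    simpa [List.append_assoc, Multiset.cons_add] using this

lemma YK_split {H : CNFGram N T} :
    ∀ {x y : List (N ⊕ T)} {w : List T} {M : Multiset ℕ}, YK H (x ++ y) w M →
      ∃ w1 w2 M1 M2, w = w1 ++ w2 ∧ M = M1 + M2 ∧ YK H x w1 M1 ∧ YK H y w2 M2 := by
  intro x
  induction x with
  | nil => exact fun {y w M} h => ⟨[], w, 0, M, by simp, by simp, YK.nil, h⟩
  | cons s x ih =>
    intro y w M h
    cases h with
    | consT h =>
      obtain ⟨w1, w2, M1, M2, rfl, rfl, hx, hy⟩ := ih h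
      exact ⟨_ :: w1, w2, M1, M2, rfl, rfl, YK.consT hx, hy⟩
    | consN ht h =>
      obtain ⟨w1, w2, M1, M2, rfl, rfl, hx, hy⟩ := ih h
      exact ⟨_ ++ w1, w2, _ ::ₘ M1, M2, by simp [List.append_assoc],
        by simp [Multiset.cons_add], YK.consN ht hx, hy⟩

lemma YK_term_prefix {H : CNFGram N T} {t : Option T} {z : List (N ⊕ T)}
    {w : List T} {M : Multiset ℕ} (h : YK H (t.toList.map Sum.inr ++ z) w M) :
    ∃ w', w = t.toList ++ w' ∧ YK H z w' M := by
  cases t with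
  | none => exact ⟨w, by simpa using rfl, by simpa using h⟩
  | some a =>
    simp only [Option.toList, List.map_cons, List.map_nil, List.cons_append,
      List.nil_append] at h
    cases h with
    | consT h => exact ⟨_, by simp, h⟩

/-- Key extraction lemma: an index-`k` derivation to a terminal word yields
trees whose weight multiset is compatible with `k`. -/
lemma extract {H : CNFGram N T} {k : ℕ} {α : List (N ⊕ T)} {w : List T}
    (h : Relation.ReflTransGen (CNFStepK H k) α (w.map Sum.inr)) :
    ∃ M, YK H α w M ∧ ok k M := by
  induction h using Relation.ReflTransGen.head_induction_on with
  | refl => exact ⟨0, YK_refl w, ok_zero k⟩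
  | head step rest ih =>
    obtain ⟨M, hyk, hok⟩ := ih
    obtain ⟨st, hcu, _⟩ := step
    cases st with
    | @bin x z A B C hbin =>
      rw [List.append_assoc] at hyk
      obtain ⟨wx, w2, Mx, M2, rfl, rfl, hx, h2⟩ := YK_split hyk
      simp only [List.cons_append, List.nil_append] at h2
      cases h2 with
      | @consN _ _ u _ _ d htB h2' =>
        cases h2' with
        | @consN z' wz v Mz _ e htC hz =>
          have comb := YD_comb hbin htB htC
          refine ⟨Mx + ((if d = e then d + 1 else max d e) ::ₘ Mz), ?_, ?_⟩
          · have hnew := YK_append hx (YK.consN comb hz)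
            rw [List.append_assoc]
            simpa [List.append_assoc] using hnew
          · have heq1 : Mx + ((if d = e then d + 1 else max d e) ::ₘ Mz) =
                (if d = e then d + 1 else max d e) ::ₘ (Mx + Mz) := by
              rw [add_comm Mx ((if d = e then d + 1 else max d e) ::ₘ Mz),
                Multiset.cons_add, add_comm Mz Mx]
            have heq2 : Mx + (d ::ₘ e ::ₘ Mz) = d ::ₘ e ::ₘ (Mx + Mz) := by
              rw [add_comm Mx (d ::ₘ e ::ₘ Mz), Multiset.cons_add, Multiset.cons_add,
                add_comm Mz Mx]
            rw [heq1]
            rw [heq2] at hok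
            exact okB hok
    | @term x z A t hterm =>
      rw [List.append_assoc] at hyk
      obtain ⟨wx, w2, Mx, M2, rfl, rfl, hx, h2⟩ := YK_split hyk
      obtain ⟨w', rfl, hz⟩ := YK_term_prefix h2
      have htree : YD H 1 A t.toList := YD.term hterm le_rfl
      have hnew : YK H (x ++ [Sum.inl A] ++ z) (wx ++ (t.toList ++ w'))
          (Mx + (1 ::ₘ M2)) := by
        rw [List.append_assoc]
        exact YK_append hx (YK.consN htree hz)
      refine ⟨_, hnew, ?_⟩
      have heq : Mx + (1 ::ₘ M2) = 1 ::ₘ (Mx + M2) := by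
        rw [add_comm Mx (1 ::ₘ M2), Multiset.cons_add, add_comm M2 Mx]
      rw [heq]
      refine okA ?_ hok
      have hcx := YK_card hx
      have hcz := YK_card hz
      have hce : countN (x ++ [Sum.inl A] ++ z) = countN x + 1 + countN z := by
        simp [countN_append, countN, List.filter_cons]
        omega
      rw [Multiset.card_add]
      omega

end AGaux
namespace AGaux

variable {N T : Type}

lemma exists_k {H : CNFGram N T} {u v : List (N ⊕ T)}
    (h : Relation.ReflTransGen (CNFStep H) u v) :
    ∃ k, Relation.ReflTransGen (CNFStepK H k) u v := by
  induction h with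
  | refl => exact ⟨0, .refl⟩
  | @tail b c hab hbc ih =>
    obtain ⟨k, hk⟩ := ih
    refine ⟨max k (max (countN b) (countN c)), ?_⟩
    exact (chainK_mono (le_max_left _ _) hk).tail
      ⟨hbc, le_max_of_le_right (le_max_left _ _), le_max_of_le_right (le_max_right _ _)⟩

lemma langFrom_iff {H : CNFGram N T} {A : N} {w : List T} :
    w ∈ CNFLangFrom H A ↔ ∃ k, YD H k A w := by
  constructor
  · intro hw
    obtain ⟨k, hk⟩ := exists_k hw
    obtain ⟨M, hyk, -⟩ := extract hk
    cases hyk with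
    | @consN _ _ u _ _ d ht h0 =>
      cases h0
      exact ⟨d, by simpa using ht⟩
  · rintro ⟨k, hk⟩
    exact Relation.ReflTransGen.mono (r := CNFStepK H k) (p := CNFStep H) (fun _ _ hab => hab.1) _ _ (YD_derive hk)

lemma langK_iff {G : CNFGram N T} {A : N} {w : List T} {i : ℕ} :
    w ∈ CNFLangK G (i + 1) A ↔ YD G (i + 1) A w := by
  constructor
  · intro hw
    obtain ⟨M, hyk, hok⟩ := extract hw
    cases hyk with
    | @consN _ _ u _ _ d ht h0 =>
      cases h0
      have hd : d ≤ i + 1 := by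
        have := hok d (by rw [cnt_cons_le le_rfl]; simp [cnt_zero])
        rw [cnt_cons_le le_rfl, cnt_zero] at this
        omega
      exact YD_mono (by simpa using ht) hd
  · exact fun h => YD_derive h

lemma ann_to_G {G : CNFGram N T} {ℓ : ℕ} {k : ℕ} {p : N × ℕ} {w : List T}
    (h : YD (annGram G ℓ) k p w) : YD G (p.2 + 1) p.1 w := by
  induction h with
  | term h hi => exact YD.term h.2 (by omega)
  | @binl P Q R u v j h hb hc ihb ihc =>
    obtain ⟨h1, h2, hbin, hor⟩ := h
    rcases hor with ⟨hq, hr⟩ | ⟨hq, hr⟩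
    · rw [hq] at ihb
      rw [show R.2 + 1 = P.2 from by omega] at ihc
      exact YD.binl hbin ihb ihc
    · rw [show Q.2 + 1 = P.2 from by omega] at ihb
      rw [hr] at ihc
      exact YD.binr hbin ihb ihc
  | @binr P Q R u v j h hb hc ihb ihc =>
    obtain ⟨h1, h2, hbin, hor⟩ := h
    rcases hor with ⟨hq, hr⟩ | ⟨hq, hr⟩
    · rw [hq] at ihb
      rw [show R.2 + 1 = P.2 from by omega] at ihc
      exact YD.binl hbin ihb ihc
    · rw [show Q.2 + 1 = P.2 from by omega] at ihb
      rw [hr] at ihc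
      exact YD.binr hbin ihb ihc

lemma G_to_ann {G : CNFGram N T} {ℓ : ℕ} {k : ℕ} {A : N} {w : List T}
    (h : YD G k A w) : ∀ i : ℕ, k = i + 1 → i ≤ ℓ → YD (annGram G ℓ) k (A, i) w := by
  induction h with
  | @term A t j h hj =>
    intro i hk hi
    exact YD.term ⟨hi, h⟩ hj
  | @binl A B C u v j h hb hc ihb ihc =>
    intro i hk hiℓ
    have hji : j = i := by omega
    subst hji
    have hipos : 1 ≤ j := YD_pos hc
    have hB := ihb j rfl hiℓ
    have hC := ihc (j - 1) (by omega) (by omega)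
    exact YD.binl (⟨hipos, hiℓ, h, Or.inl ⟨rfl, rfl⟩⟩ :
      (annGram G ℓ).bin (A, j) (B, j) (C, j - 1)) hB hC
  | @binr A B C u v j h hb hc ihb ihc =>
    intro i hk hiℓ
    have hji : j = i := by omega
    subst hji
    have hipos : 1 ≤ j := YD_pos hb
    have hC := ihc j rfl hiℓ
    have hB := ihb (j - 1) (by omega) (by omega)
    exact YD.binr (⟨hipos, hiℓ, h, Or.inr ⟨rfl, rfl⟩⟩ :
      (annGram G ℓ).bin (A, j) (B, j - 1) (C, j)) hB hC

end AGaux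


/-- **Atig–Ganty.** For every CNF grammar `G`, nonterminal `A`
and indices `0 ≤ i ≤ ℓ`, the language generated from `A^[i]` in `G^[ℓ]` equals
the index-`(i+1)` approximation of the language of `A` in `G`:
`L(G^[ℓ], A^[i]) = L_{i+1}(G, A)`. -/
theorem annotated_grammar_language {N T : Type} (G : CNFGram N T)
    (ℓ i : ℕ) (hi : i ≤ ℓ) (A : N) :
    CNFLangFrom (annGram G ℓ) (A, i) = CNFLangK G (i + 1) A := by
  ext w
  constructor
  · intro hw
    obtain ⟨k, hk⟩ := AGaux.langFrom_iff.mp hw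
    exact AGaux.langK_iff.mpr (AGaux.ann_to_G hk)
  · intro hw
    have h1 := AGaux.langK_iff.mp hw
    exact AGaux.langFrom_iff.mpr ⟨i + 1, AGaux.G_to_ann h1 i rfl hi⟩
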